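/- Let g₁ and g₂ be 2×2 real matrices with det(g₁) = det(g₂) = 1. Then det(g₁g₂ − g₂g₁) = −4·Θ(X₁, X₂, X₃), where X₁ = tr(g₁)/2, X₂ = tr(g₂)/2, X₃ = tr(g₁g₂)/2. (This identity computes the Minkowski square norm of the normal to the geodesic plane of the AdS₃ triangle (1, g₁, g₂); in particular the triangle is null or degenerate exactly when Θ = 0.) -/
import Mathlib


open Matrix

/-- `Θ(X₁,X₂,X₃) := (X₃ − X₁X₂)² − (X₁² − 1)(X₂² − 1)` (real version). -/
def ThetaR (X₁ X₂ X₃ : ℝ) : ℝ := (X₃ - X₁ * X₂) ^ 2 - (X₁ ^ 2 - 1) * (X₂ ^ 2 - 1)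

/-- For `g₁, g₂` real 2×2 matrices of determinant 1,
`det(g₁g₂ − g₂g₁) = −4·Θ(tr g₁/2, tr g₂/2, tr (g₁g₂)/2)`. -/
theorem det_commutator_eq_neg_four_theta
    (g₁ g₂ : Matrix (Fin 2) (Fin 2) ℝ) (h₁ : g₁.det = 1) (h₂ : g₂.det = 1) :
    (g₁ * g₂ - g₂ * g₁).det =
      -4 * ThetaR (g₁.trace / 2) (g₂.trace / 2) ((g₁ * g₂).trace / 2) := by
  rw [Matrix.det_fin_two] at h₁ h₂ ⊢
  simp only [ThetaR, Matrix.trace_fin_two, Matrix.sub_apply, Matrix.mul_apply,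
    Fin.sum_univ_two]
  linear_combination
    (4 * (g₂ 0 0 * g₂ 1 1 - g₂ 0 1 * g₂ 1 0) - (g₂ 0 0 + g₂ 1 1) ^ 2) * h₁ +
    (4 - (g₁ 0 0 + g₁ 1 1) ^ 2) * h₂
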